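/- Andréief identity: for integrable functions f₀,…,f_{N−1}, g₀,…,g_{N−1} on a measure space (E, μ), ∫_{E^N} det[f_j(x_k)]_{j,k=0}^{N−1} det[g_j(x_k)]_{j,k=0}^{N−1} dμ^{⊗N}(x) = N! · det[ ∫_E f_j(x) g_k(x) dμ(x) ]_{j,k=0}^{N−1}. -/

import Mathlib

open MeasureTheory

open Equiv Finset in
theorem andreief_alg (N : ℕ) (A : Matrix (Fin N) (Fin N) ℝ) :
    ∑ σ : Perm (Fin N), ∑ τ : Perm (Fin N),
      (((Perm.sign σ : ℤ) : ℝ) * ((Perm.sign τ : ℤ) : ℝ)) * ∏ i, A (σ i) (τ i)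
      = (Nat.factorial N : ℝ) * A.det := by
  have h : ∀ σ : Perm (Fin N), ∑ τ : Perm (Fin N),
      (((Perm.sign σ : ℤ) : ℝ) * ((Perm.sign τ : ℤ) : ℝ)) * ∏ i, A (σ i) (τ i) = A.det := by
    intro σ
    rw [← Matrix.det_transpose A, Matrix.det_apply']
    refine Fintype.sum_equiv (Equiv.mulRight σ⁻¹) _ _ fun ρ => ?_
    simp only [Equiv.coe_mulRight]
    congr 1
    · simp only [Equiv.Perm.sign_mul, Equiv.Perm.sign_inv, Units.val_mul, Int.cast_mul]
      ring
    · refine Eq.trans (Finset.prod_congr rfl fun i _ => ?_)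
        (Equiv.prod_comp σ fun x => A.transpose ((ρ * σ⁻¹) x) x)
      simp [Matrix.transpose_apply]
  simp only [h, Finset.sum_const, Fintype.card_perm, Fintype.card_fin, nsmul_eq_mul,
    Finset.card_univ]

/-- Andréief identity. -/
theorem stmt11 {E : Type*} [MeasurableSpace E] (μ : Measure E) [SigmaFinite μ]
    (N : ℕ) (f g : Fin N → E → ℝ)
    (hf : ∀ j, Measurable (f j)) (hg : ∀ j, Measurable (g j))
    (hint : ∀ j k, Integrable (fun x => f j x * g k x) μ) :
    ∫ x : Fin N → E,
        (Matrix.det (Matrix.of fun j k : Fin N => f j (x k))) *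
        (Matrix.det (Matrix.of fun j k : Fin N => g j (x k)))
        ∂(Measure.pi fun _ => μ) =
      (Nat.factorial N : ℝ) *
        Matrix.det (Matrix.of fun j k : Fin N => ∫ x, f j x * g k x ∂μ) := by
  classical
  letI : MeasureSpace E := ⟨μ⟩
  have hexp : ∀ x : Fin N → E,
      (Matrix.det (Matrix.of fun j k : Fin N => f j (x k))) *
      (Matrix.det (Matrix.of fun j k : Fin N => g j (x k))) =
      ∑ p : Equiv.Perm (Fin N) × Equiv.Perm (Fin N),
        (((Equiv.Perm.sign p.1 : ℤ) : ℝ) * ((Equiv.Perm.sign p.2 : ℤ) : ℝ)) *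
          ∏ i, (f (p.1 i) (x i) * g (p.2 i) (x i)) := by
    intro x
    rw [Matrix.det_apply', Matrix.det_apply', Finset.sum_mul_sum, Fintype.sum_prod_type]
    refine Finset.sum_congr rfl fun σ _ => Finset.sum_congr rfl fun τ _ => ?_
    rw [Finset.prod_mul_distrib]
    simp only [Matrix.of_apply]
    ring
  have hterm : ∀ p : Equiv.Perm (Fin N) × Equiv.Perm (Fin N),
      Integrable (fun x : Fin N → E => ∏ i, (f (p.1 i) (x i) * g (p.2 i) (x i)))
        (Measure.pi fun _ => μ) := fun p =>
    Integrable.fintype_prod (f := fun i y => f (p.1 i) y * g (p.2 i) y)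
      (fun i => hint (p.1 i) (p.2 i))
  simp_rw [hexp]
  rw [integral_finset_sum _ (fun p _ => (hterm p).const_mul _)]
  have hintg : ∀ p : Equiv.Perm (Fin N) × Equiv.Perm (Fin N),
      ∫ x : Fin N → E, ∏ i, (f (p.1 i) (x i) * g (p.2 i) (x i)) ∂(Measure.pi fun _ => μ)
        = ∏ i, ∫ y, f (p.1 i) y * g (p.2 i) y ∂μ := fun p =>
    integral_fintype_prod_eq_prod (fun i y => f (p.1 i) y * g (p.2 i) y)
  simp_rw [integral_const_mul, hintg]
  rw [← andreief_alg N (Matrix.of fun j k => ∫ x, f j x * g k x ∂μ), Fintype.sum_prod_type]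
  simp [Matrix.of_apply]
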